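/- Let P = (A,B,R), P' = (A',B',R'), Q = (C,B,T) and Q' = (C',B',T') be relations, and suppose there is a partial order ⪯ on B that is both downwards P-compatible and upwards Q-compatible. If TWO has a winning strategy in the game G_fin(Dom(P'), Dom(Q')) and (Dom(P), Dom(Q))-Lindelöf holds, then (Dom(P⊗P'), Dom(Q⊗Q'))-Lindelöf holds. -/

import Mathlib

open Set

/-- `GDom R` is the set of dominating families of the relation `R`:
sets `Z ⊆ B` such that every `a ∈ A` is dominated by some `b ∈ Z`. -/
def GDom {α β : Type*} (R : α → β → Prop) : Set (Set β) :=
  {Z | ∀ a : α, ∃ b ∈ Z, R a b}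

/-- A relation is total: every element of the domain is dominated by something. -/
def IsTotalRel {α β : Type*} (R : α → β → Prop) : Prop :=
  ∀ a : α, ∃ b : β, R a b

/-- The product of two relations. -/
def GProd {α β α' β' : Type*} (R : α → β → Prop) (R' : α' → β' → Prop) :
    α × α' → β × β' → Prop :=
  fun a b => R a.1 b.1 ∧ R' a.2 b.2

/-- The finite history consisting of the first `n` moves of the sequence `b`. -/
def GHist {β : Type*} (b : ℕ → β) (n : ℕ) : List β :=
  List.ofFn fun i : Fin n => b i

/-- ONE has a winning strategy in the game `G(P,Q)`: in inning `n` ONE plays `aₙ ∈ A`,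
TWO answers `bₙ` with `R aₙ bₙ`; ONE wins iff `{bₙ : n} ∈ GDom T`. -/
def OneWinsG {α β γ : Type*} (R : α → β → Prop) (T : γ → β → Prop) : Prop :=
  ∃ σ : List β → α, ∀ b : ℕ → β,
    (∀ n, R (σ (GHist b n)) (b n)) → Set.range b ∈ GDom T

/-- TWO has a winning strategy in the game `G(P,Q)`. -/
def TwoWinsG {α β γ : Type*} (R : α → β → Prop) (T : γ → β → Prop) : Prop :=
  ∃ τ : List α → β, ∀ a : ℕ → α,
    (∀ n, R (a n) (τ (GHist a (n + 1)))) ∧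
    Set.range (fun n => τ (GHist a (n + 1))) ∉ GDom T

/-- ONE has a winning strategy in the game `G₁(𝒜,ℬ)`: in inning `n` ONE plays `Aₙ ∈ 𝒜`,
TWO answers `bₙ ∈ Aₙ`; TWO wins iff `{bₙ : n} ∈ ℬ`. -/
def OneWinsG1 {β : Type*} (𝒜 ℬ : Set (Set β)) : Prop :=
  ∃ σ : List β → Set β, (∀ h, σ h ∈ 𝒜) ∧
    ∀ b : ℕ → β, (∀ n, b n ∈ σ (GHist b n)) → Set.range b ∉ ℬ

/-- TWO has a winning strategy in the game `G₁(𝒜,ℬ)`. -/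
def TwoWinsG1 {β : Type*} (𝒜 ℬ : Set (Set β)) : Prop :=
  ∃ τ : List (Set β) → β, ∀ S : ℕ → Set β, (∀ n, S n ∈ 𝒜) →
    (∀ n, τ (GHist S (n + 1)) ∈ S n) ∧
    Set.range (fun n => τ (GHist S (n + 1))) ∈ ℬ

/-- TWO has a winning strategy in the game `G_fin(𝒜,ℬ)`: in inning `n` ONE plays `Aₙ ∈ 𝒜`,
TWO answers a finite `Fₙ ⊆ Aₙ`; TWO wins iff `⋃ₙ Fₙ ∈ ℬ`. -/
def TwoWinsGfin {β : Type*} (𝒜 ℬ : Set (Set β)) : Prop :=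
  ∃ τ : List (Set β) → Set β, ∀ S : ℕ → Set β, (∀ n, S n ∈ 𝒜) →
    (∀ n, τ (GHist S (n + 1)) ⊆ S n ∧ (τ (GHist S (n + 1))).Finite) ∧
    (⋃ n, τ (GHist S (n + 1))) ∈ ℬ

/-- `(𝒜,ℬ)`-Lindelöf: every member of `𝒜` has a countable subset belonging to `ℬ`. -/
def LindelofFam {β : Type*} (𝒜 ℬ : Set (Set β)) : Prop :=
  ∀ S ∈ 𝒜, ∃ C ⊆ S, C.Countable ∧ C ∈ ℬ

/-- The selection principle `S₁(𝒜,ℬ)`. -/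
def SelS1 {β : Type*} (𝒜 ℬ : Set (Set β)) : Prop :=
  ∀ A : ℕ → Set β, (∀ n, A n ∈ 𝒜) →
    ∃ b : ℕ → β, (∀ n, b n ∈ A n) ∧ Set.range b ∈ ℬ

/-- The selection principle `S_fin(𝒜,ℬ)`. -/
def SelSfin {β : Type*} (𝒜 ℬ : Set (Set β)) : Prop :=
  ∀ A : ℕ → Set β, (∀ n, A n ∈ 𝒜) →
    ∃ F : ℕ → Set β, (∀ n, F n ⊆ A n ∧ (F n).Finite) ∧ (⋃ n, F n) ∈ ℬ

/-- `𝒪_X`: the family of open covers of `X`. -/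
def OpenCovers (X : Type*) [TopologicalSpace X] : Set (Set (Set X)) :=
  {𝒰 | (∀ U ∈ 𝒰, IsOpen U) ∧ ⋃₀ 𝒰 = Set.univ}

/-- ONE has a winning strategy in the point-open game on `X`. -/
def OneWinsPointOpen (X : Type*) [TopologicalSpace X] : Prop :=
  ∃ σ : List (Set X) → X, ∀ U : ℕ → Set X,
    (∀ n, IsOpen (U n) ∧ σ (GHist U n) ∈ U n) → Set.range U ∈ OpenCovers X

/-- TWO has a winning strategy in the point-open game on `X`. -/
def TwoWinsPointOpen (X : Type*) [TopologicalSpace X] : Prop :=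
  ∃ τ : List X → Set X, ∀ x : ℕ → X,
    (∀ n, IsOpen (τ (GHist x (n + 1))) ∧ x n ∈ τ (GHist x (n + 1))) ∧
    Set.range (fun n => τ (GHist x (n + 1))) ∉ OpenCovers X

/-- `𝔇_X`: the family of dense subsets of `X`. -/
def DenseSets (X : Type*) [TopologicalSpace X] : Set (Set X) :=
  {D | Dense D}

/-- ONE has a winning strategy in the point-picking game `G^D_ω(X)` of Berner and Juhász. -/
def OneWinsPointPicking (X : Type*) [TopologicalSpace X] : Prop :=
  ∃ σ : List X → Set X, (∀ h, IsOpen (σ h) ∧ (σ h).Nonempty) ∧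
    ∀ x : ℕ → X, (∀ n, x n ∈ σ (GHist x n)) → Dense (Set.range x)

/-- TWO has a winning strategy in the point-picking game `G^D_ω(X)`. -/
def TwoWinsPointPicking (X : Type*) [TopologicalSpace X] : Prop :=
  ∃ τ : List (Set X) → X, ∀ U : ℕ → Set X,
    (∀ n, IsOpen (U n) ∧ (U n).Nonempty) →
    (∀ n, τ (GHist U (n + 1)) ∈ U n) ∧
    ¬ Dense (Set.range fun n => τ (GHist U (n + 1)))

/-- `𝒟_X`: families of open sets whose union is dense in `X`. -/
def DenseUnionFams (X : Type*) [TopologicalSpace X] : Set (Set (Set X)) :=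
  {𝒰 | (∀ U ∈ 𝒰, IsOpen U) ∧ Dense (⋃₀ 𝒰)}

/-- ONE has a winning strategy in Tkachuk's game `θ(X)`. -/
def OneWinsTheta (X : Type*) [TopologicalSpace X] : Prop :=
  ∃ σ : List (Set X) → X, ∀ U : ℕ → Set X,
    (∀ n, IsOpen (U n) ∧ σ (GHist U n) ∈ U n) → Dense (⋃ n, U n)

/-- TWO has a winning strategy in Tkachuk's game `θ(X)`. -/
def TwoWinsTheta (X : Type*) [TopologicalSpace X] : Prop :=
  ∃ τ : List X → Set X, ∀ x : ℕ → X,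
    (∀ n, IsOpen (τ (GHist x (n + 1))) ∧ x n ∈ τ (GHist x (n + 1))) ∧
    ¬ Dense (⋃ n, τ (GHist x (n + 1)))

/-- `Ω_x`: the family of subsets of `X` having `x` in their closure. -/
def OmegaPt {X : Type*} [TopologicalSpace X] (x : X) : Set (Set X) :=
  {A | x ∈ closure A}

/-- ONE has a winning strategy in Gruenhage's game `G^c_{O,P}(X,x)`. -/
def OneWinsGruenhage {X : Type*} [TopologicalSpace X] (x : X) : Prop :=
  ∃ σ : List X → Set X, (∀ h, IsOpen (σ h) ∧ x ∈ σ h) ∧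
    ∀ y : ℕ → X, (∀ n, y n ∈ σ (GHist y n)) → x ∈ closure (Set.range y)

/-- TWO has a winning strategy in Gruenhage's game `G^c_{O,P}(X,x)`. -/
def TwoWinsGruenhage {X : Type*} [TopologicalSpace X] (x : X) : Prop :=
  ∃ τ : List (Set X) → X, ∀ V : ℕ → Set X,
    (∀ n, IsOpen (V n) ∧ x ∈ V n) →
    (∀ n, τ (GHist V (n + 1)) ∈ V n) ∧
    x ∉ closure (Set.range fun n => τ (GHist V (n + 1)))

/-- ONE has a winning strategy in the compact-open game on `X`. -/
def OneWinsCompactOpen (X : Type*) [TopologicalSpace X] : Prop :=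
  ∃ σ : List (Set X) → Set X, (∀ h, IsCompact (σ h)) ∧
    ∀ U : ℕ → Set X, (∀ n, IsOpen (U n) ∧ σ (GHist U n) ⊆ U n) →
      (⋃ n, U n) = Set.univ

/-- `⪯` is downwards `P`-compatible. -/
def DownwardsCompat {α β : Type*} (R : α → β → Prop) (le : β → β → Prop) : Prop :=
  ∀ a b₁ b₂, R a b₁ → R a b₂ → ∃ b, R a b ∧ le b b₁ ∧ le b b₂

/-- `⪯` is upwards `Q`-compatible. -/
def UpwardsCompat {γ β : Type*} (T : γ → β → Prop) (le : β → β → Prop) : Prop :=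
  ∀ c b₁ b₂, T c b₁ → le b₁ b₂ → T c b₂

/-- `⪯` is countably downwards `P`-compatible. -/
def CountablyDownwardsCompat {α β : Type*} (R : α → β → Prop) (le : β → β → Prop) : Prop :=
  ∀ a, ∀ E : Set β, E.Countable → E.Nonempty → (∀ b ∈ E, R a b) →
    ∃ b', R a b' ∧ ∀ b ∈ E, le b' b

/-- A relation is `ℵ₀`-preserving if some partial order on `B` is both upwards
compatible and countably downwards compatible with it. -/
def Aleph0Preserving {α β : Type*} (R : α → β → Prop) : Prop :=
  ∃ le : β → β → Prop, IsPartialOrder β le ∧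
    UpwardsCompat R le ∧ CountablyDownwardsCompat R le

/-- `Dom_γ(T)`: the γ-dominating sequences of the relation `T`. -/
def GDomGamma {γ β : Type*} (T : γ → β → Prop) : Set (ℕ → β) :=
  {z | ∀ c : γ, {n : ℕ | ¬ T c (z n)}.Finite}

/-- ONE has a winning strategy in the game `G_γ(P,Q)`. -/
def OneWinsGgamma {α β γ : Type*} (R : α → β → Prop) (T : γ → β → Prop) : Prop :=
  ∃ σ : List β → α, ∀ b : ℕ → β,
    (∀ n, R (σ (GHist b n)) (b n)) → b ∈ GDomGamma T

/-- TWO has a winning strategy in the game `G_γ(P,Q)`. -/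
def TwoWinsGgamma {α β γ : Type*} (R : α → β → Prop) (T : γ → β → Prop) : Prop :=
  ∃ τ : List α → β, ∀ a : ℕ → α,
    (∀ n, R (a n) (τ (GHist a (n + 1)))) ∧
    (fun n => τ (GHist a (n + 1))) ∉ GDomGamma T

/-- ONE has a winning strategy in the game `G₁(𝒜, Dom_γ(T))`. -/
def OneWinsG1gamma {β γ : Type*} (𝒜 : Set (Set β)) (T : γ → β → Prop) : Prop :=
  ∃ σ : List β → Set β, (∀ h, σ h ∈ 𝒜) ∧
    ∀ b : ℕ → β, (∀ n, b n ∈ σ (GHist b n)) → b ∉ GDomGamma T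

/-- TWO has a winning strategy in the game `G₁(𝒜, Dom_γ(T))`. -/
def TwoWinsG1gamma {β γ : Type*} (𝒜 : Set (Set β)) (T : γ → β → Prop) : Prop :=
  ∃ τ : List (Set β) → β, ∀ S : ℕ → Set β, (∀ n, S n ∈ 𝒜) →
    (∀ n, τ (GHist S (n + 1)) ∈ S n) ∧
    (fun n => τ (GHist S (n + 1))) ∈ GDomGamma T

/-- The `ℵ₀`-modification of a relation: moves become nonempty countable subsets of `B`,
dominated pointwise. -/
def CountMod {α β : Type*} (R : α → β → Prop) :
    α → {E : Set β // E.Countable ∧ E.Nonempty} → Prop :=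
  fun a E => ∀ b ∈ E.1, R a b

lemma GHist_zero {β : Type*} (b : ℕ → β) : GHist b 0 = [] := rfl

lemma GHist_succ {β : Type*} (b : ℕ → β) (n : ℕ) :
    GHist b (n + 1) = GHist b n ++ [b n] := by
  show List.ofFn (fun i : Fin (n+1) => b i) = _
  rw [List.ofFn_succ']
  simp [GHist, List.concat_eq_append, Fin.last]

lemma GHist_getD {β : Type*} (L : List β) (d : β) :
    GHist (fun n => L.getD n d) L.length = L := by
  apply List.ext_getElem
  · simp [GHist]
  · intro i h1 h2
    simp [GHist, List.getD_eq_getElem _ _ h2]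

/-- With a partial order on `B` downwards `P`-compatible and upwards
`Q`-compatible, if TWO has a winning strategy in `G_fin(Dom(P'), Dom(Q'))` and
`(Dom(P), Dom(Q))`-Lindelöf holds, then `(Dom(P⊗P'), Dom(Q⊗Q'))`-Lindelöf holds. -/
theorem statement12 {α β γ α' β' γ' : Type*}
    [Nonempty α] [Nonempty γ] [Nonempty α'] [Nonempty γ']
    (R : α → β → Prop) (T : γ → β → Prop)
    (R' : α' → β' → Prop) (T' : γ' → β' → Prop)
    (hR : IsTotalRel R) (hT : IsTotalRel T)
    (hR' : IsTotalRel R') (hT' : IsTotalRel T')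
    (le : β → β → Prop) (hpo : IsPartialOrder β le)
    (hdown : DownwardsCompat R le) (hup : UpwardsCompat T le)
    (hwin : TwoWinsGfin (GDom R') (GDom T'))
    (hLin : LindelofFam (GDom R) (GDom T)) :
    LindelofFam (GDom (GProd R R')) (GDom (GProd T T')) := by
  classical
  intro S hS
  obtain ⟨τ, hτ⟩ := hwin
  have hβ : Nonempty β := ⟨(hR (Classical.arbitrary α)).choose⟩
  have hβ' : Nonempty β' := ⟨(hR' (Classical.arbitrary α')).choose⟩
  have huniv : (Set.univ : Set β') ∈ GDom R' := fun a' =>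
    ⟨(hR' a').choose, trivial, (hR' a').choose_spec⟩
  -- ONE's canonical moves
  let Amove : α → Set β' := fun a => {b' | ∃ b, R a b ∧ (b, b') ∈ S}
  have hAmove : ∀ a, Amove a ∈ GDom R' := by
    intro a a'
    obtain ⟨p, hpS, hp1, hp2⟩ := hS (a, a')
    exact ⟨p.2, ⟨p.1, hp1, hpS⟩, hp2⟩
  -- finite-history legality of TWO's strategy
  have hfin : ∀ (L : List (Set β')) (X : Set β'), (∀ Y ∈ L, Y ∈ GDom R') → X ∈ GDom R' →
      τ (L ++ [X]) ⊆ X ∧ (τ (L ++ [X])).Finite := by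
    intro L X hL hX
    have hSpmem : ∀ n, (fun n => (L ++ [X]).getD n Set.univ) n ∈ GDom R' := by
      intro n
      show (L ++ [X]).getD n Set.univ ∈ GDom R'
      by_cases h : n < (L ++ [X]).length
      · rw [List.getD_eq_getElem _ _ h]
        have hmem := List.getElem_mem h
        rcases List.mem_append.mp hmem with h' | h'
        · exact hL _ h'
        · rw [List.mem_singleton.mp h']; exact hX
      · rw [List.getD_eq_default _ _ (le_of_not_gt h)]; exact huniv
    have hgh : GHist (fun n => (L ++ [X]).getD n Set.univ) (L.length + 1) = L ++ [X] := by
      have := GHist_getD (L ++ [X]) (Set.univ : Set β')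
      simpa using this
    have hX' : (L ++ [X]).getD L.length Set.univ = X := by
      rw [List.getD_eq_getElem]
      · simp
      · simp
    have := (hτ (fun n => (L ++ [X]).getD n Set.univ) hSpmem).1 L.length
    rw [hgh, hX'] at this
    exact this
  -- finite lower bounds
  have hlbF : ∀ (a : α) (t : Finset β), (∀ x ∈ t, R a x) → ∃ b, R a b ∧ ∀ x ∈ t, le b x := by
    intro a t
    induction t using Finset.induction_on with
    | empty => exact fun _ => ⟨(hR a).choose, (hR a).choose_spec, by simp⟩
    | @insert x t hx ih =>
      intro hall
      obtain ⟨b0, hb0, hb0le⟩ := ih fun y hy => hall y (Finset.mem_insert_of_mem hy)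
      obtain ⟨b, hb, hb1, hb2⟩ := hdown a x b0 (hall x (Finset.mem_insert_self x t)) hb0
      refine ⟨b, hb, fun y hy => ?_⟩
      rcases Finset.mem_insert.mp hy with rfl | hy
      · exact hb1
      · exact hpo.toIsPreorder.toIsTrans.trans _ _ _ hb2 (hb0le y hy)
  have hlb : ∀ (a : α) (G : Set β), G.Finite → (∀ x ∈ G, R a x) → ∃ b, R a b ∧ ∀ x ∈ G, le b x := by
    intro a G hG hall
    obtain ⟨b, hb, hble⟩ := hlbF a hG.toFinset (by simpa using hall)
    exact ⟨b, hb, fun x hx => hble x (hG.mem_toFinset.mpr hx)⟩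
  -- tubes
  have htubeex : ∀ (h : List (Set β')) (a : α), ∃ t : β, (∀ Y ∈ h, Y ∈ GDom R') →
      R a t ∧ ∀ b' ∈ τ (h ++ [Amove a]), ∃ b₁, le t b₁ ∧ (b₁, b') ∈ S := by
    intro h a
    by_cases hleg : ∀ Y ∈ h, Y ∈ GDom R'
    · obtain ⟨hsub, hfin'⟩ := hfin h (Amove a) hleg (hAmove a)
      have hw : ∀ b' ∈ τ (h ++ [Amove a]), ∃ b₁, R a b₁ ∧ (b₁, b') ∈ S := fun b' hb' => hsub hb'
      choose! g hg1 hg2 using hw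
      obtain ⟨t, ht1, ht2⟩ := hlb a (g '' τ (h ++ [Amove a])) (hfin'.image g)
        (by rintro x ⟨b', hb', rfl⟩; exact hg1 b' hb')
      exact ⟨t, fun _ => ⟨ht1, fun b' hb' => ⟨g b', ht2 _ ⟨b', hb', rfl⟩, hg2 b' hb'⟩⟩⟩
    · exact ⟨Classical.arbitrary β, fun h' => absurd h' hleg⟩
  choose tube htube using htubeex
  -- countable dominating families of tubes
  have henumex : ∀ h : List (Set β'), ∃ e : ℕ → β, (∀ Y ∈ h, Y ∈ GDom R') →
      (Set.range e ∈ GDom T ∧ ∀ k, ∃ a, e k = tube h a) := by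
    intro h
    by_cases hleg : ∀ Y ∈ h, Y ∈ GDom R'
    · have hdom : Set.range (tube h) ∈ GDom R := fun a =>
        ⟨tube h a, ⟨a, rfl⟩, (htube h a hleg).1⟩
      obtain ⟨C₀, hC₀sub, hC₀c, hC₀T⟩ := hLin _ hdom
      have hne : C₀.Nonempty := by
        obtain ⟨b, hb, -⟩ := hC₀T (Classical.arbitrary γ); exact ⟨b, hb⟩
      obtain ⟨f, hf⟩ := hC₀c.exists_eq_range hne
      refine ⟨f, fun _ => ⟨hf ▸ hC₀T, fun k => ?_⟩⟩
      have hfk : f k ∈ C₀ := hf ▸ Set.mem_range_self k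
      obtain ⟨a, ha⟩ := hC₀sub hfk
      exact ⟨a, ha.symm⟩
    · exact ⟨fun _ => Classical.arbitrary β, fun h' => absurd h' hleg⟩
  choose enum henum using henumex
  have haOfex : ∀ (h : List (Set β')) (k : ℕ), ∃ a : α,
      (∀ Y ∈ h, Y ∈ GDom R') → enum h k = tube h a := by
    intro h k
    by_cases hleg : ∀ Y ∈ h, Y ∈ GDom R'
    · obtain ⟨a, ha⟩ := (henum h hleg).2 k; exact ⟨a, fun _ => ha⟩
    · exact ⟨Classical.arbitrary α, fun h' => absurd h' hleg⟩
  choose aOf haOf using haOfex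
  -- the tree of histories
  let node : List ℕ → List (Set β') := fun s =>
    s.rec [] (fun k _ ih => ih ++ [Amove (aOf ih k)])
  have hnode_cons : ∀ (k : ℕ) (s : List ℕ),
      node (k :: s) = node s ++ [Amove (aOf (node s) k)] := fun _ _ => rfl
  have hlegnode : ∀ s : List ℕ, ∀ Y ∈ node s, Y ∈ GDom R' := by
    intro s
    induction s with
    | nil => intro Y hY; exact absurd hY (List.not_mem_nil (a := Y))
    | cons k s ih =>
      rw [hnode_cons]
      intro Y hY
      rcases List.mem_append.mp hY with h | h
      · exact ih Y h
      · rw [List.mem_singleton.mp h]; exact hAmove _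
  -- witnesses
  have hwitex : ∀ (s : List ℕ) (k : ℕ) (b' : β'), ∃ b₁ : β,
      b' ∈ τ (node (k :: s)) → le (tube (node s) (aOf (node s) k)) b₁ ∧ (b₁, b') ∈ S := by
    intro s k b'
    by_cases hb' : b' ∈ τ (node (k :: s))
    · have h2 := (htube (node s) (aOf (node s) k) (hlegnode s)).2
      rw [hnode_cons] at hb'
      obtain ⟨b₁, hb1, hb2⟩ := h2 b' hb'
      exact ⟨b₁, fun _ => ⟨hb1, hb2⟩⟩
    · exact ⟨Classical.arbitrary β, fun h => absurd h hb'⟩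
  choose wit hwit using hwitex
  -- the countable subset
  refine ⟨⋃ (s : List ℕ) (k : ℕ), (fun b' => (wit s k b', b')) '' τ (node (k :: s)),
    ?_, ?_, ?_⟩
  · intro p hp
    simp only [Set.mem_iUnion, Set.mem_image] at hp
    obtain ⟨s, k, b', hb', rfl⟩ := hp
    exact (hwit s k b' hb').2
  · refine Set.countable_iUnion fun s => Set.countable_iUnion fun k => ?_
    have hfin' : (τ (node (k :: s))).Finite := by
      rw [hnode_cons]
      exact (hfin (node s) _ (hlegnode s) (hAmove _)).2
    exact (hfin'.image _).countable
  · rintro ⟨c, c'⟩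
    have hpick : ∀ s : List ℕ, ∃ k : ℕ, T c (enum (node s) k) := by
      intro s
      obtain ⟨b, ⟨k, hk⟩, hb⟩ := (henum (node s) (hlegnode s)).1 c
      exact ⟨k, hk ▸ hb⟩
    choose pick hpickT using hpick
    let branch : ℕ → List ℕ := fun n => n.rec [] (fun _ ih => pick ih :: ih)
    have hbr : ∀ n, branch (n + 1) = pick (branch n) :: branch n := fun _ => rfl
    let M : ℕ → Set β' := fun n => Amove (aOf (node (branch n)) (pick (branch n)))
    have hMnode : ∀ n, GHist M n = node (branch n) := by
      intro n
      induction n with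
      | zero => rfl
      | succ n ih =>
        rw [GHist_succ, hbr, hnode_cons, ih]
    have hMleg : ∀ n, M n ∈ GDom R' := fun n => hAmove _
    obtain ⟨-, hwin'⟩ := hτ M hMleg
    obtain ⟨b', hb'mem, hb'T⟩ := hwin' c'
    simp only [Set.mem_iUnion] at hb'mem
    obtain ⟨n, hb'n⟩ := hb'mem
    have hb'node : b' ∈ τ (node (pick (branch n) :: branch n)) := by
      rw [← hbr, ← hMnode (n + 1)]; exact hb'n
    obtain ⟨hle, hSmem⟩ := hwit (branch n) (pick (branch n)) b' hb'node
    refine ⟨(wit (branch n) (pick (branch n)) b', b'), ?_, ?_, hb'T⟩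
    · simp only [Set.mem_iUnion, Set.mem_image]
      exact ⟨branch n, pick (branch n), b', hb'node, rfl⟩
    · have h1 : T c (enum (node (branch n)) (pick (branch n))) := hpickT (branch n)
      have h2 := haOf (node (branch n)) (pick (branch n)) (hlegnode (branch n))
      rw [h2] at h1
      exact hup c _ _ h1 hle
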